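/- Let V_n denote the monic Chebyshev polynomials of the second kind (V_n(2cos θ) = sin((n+1)θ)/sin θ), and for k ≥ 0 set W_{2k} = V_{6k+1}, W_{2k+1} = V_{6k+3}. Then deg W_n = 2n + 2·⌊n/2⌋ + 1 for all n ≥ 0, and the span of {W_k : k ≥ 0} equals the direct sum T_1·ℝ[T_6] ⊕ T_1·T_2·ℝ[T_6], where T_n are the monic Chebyshev polynomials of the first kind. -/

import Mathlib

/-- Monic Chebyshev polynomial of the first kind: `Tp n` evaluated at `2 cos θ` is `2 cos (n θ)`. -/
noncomputable def Tp (n : ℤ) : Polynomial ℝ :=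
  Polynomial.C 2 * (Polynomial.Chebyshev.T ℝ n).comp (Polynomial.C (1 / 2) * Polynomial.X)

/-- Monic Chebyshev polynomial of the second kind:
`Vp n` evaluated at `2 cos θ` is `sin ((n+1) θ) / sin θ`. -/
noncomputable def Vp (n : ℤ) : Polynomial ℝ :=
  (Polynomial.Chebyshev.U ℝ n).comp (Polynomial.C (1 / 2) * Polynomial.X)

/-- `W_{2k} = V_{6k+1}`, `W_{2k+1} = V_{6k+3}`. -/
noncomputable def W (n : ℕ) : Polynomial ℝ :=
  if n % 2 = 0 then Vp (6 * (n / 2) + 1) else Vp (6 * (n / 2) + 3)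

open Polynomial Chebyshev

lemma two_half : ((2:ℕ):Polynomial ℝ) * (C (1/2) * X) = X := by
  rw [← C_eq_natCast, ← mul_assoc, ← Polynomial.C_mul]; norm_num

lemma Tp_zero : Tp 0 = C 2 := by simp [Tp]

lemma Tp_one : Tp 1 = X := by
  simp only [Tp, Chebyshev.T_one, X_comp]
  rw [← mul_assoc, ← Polynomial.C_mul]; norm_num

lemma Vp_zero : Vp 0 = 1 := by simp [Vp]

lemma Vp_one : Vp 1 = X := by
  simp only [Vp, Chebyshev.U_one, mul_comp, X_comp, ofNat_comp]
  linear_combination two_half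

lemma Vp_neg_one : Vp (-1) = 0 := by simp [Vp]

lemma Vp_neg_sub_two (n : ℤ) : Vp (-n - 2) = -Vp n := by
  simp only [Vp, Chebyshev.U_neg_sub_two, neg_comp]

lemma Vp_add_two (n : ℤ) : Vp (n + 2) = X * Vp (n + 1) - Vp n := by
  simp only [Vp, Chebyshev.U_add_two, sub_comp, mul_comp, X_comp, ofNat_comp, C_comp]
  linear_combination (U ℝ (n+1)).comp (C (1/2) * X) * two_half

lemma Tp_add_two (n : ℤ) : Tp (n + 2) = X * Tp (n + 1) - Tp n := by
  simp only [Tp, Chebyshev.T_add_two, sub_comp, mul_comp, X_comp, ofNat_comp, C_comp]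
  linear_combination (C 2 * (T ℝ (n+1)).comp (C (1/2) * X)) * two_half

lemma X_mul_Vp (n : ℤ) : X * Vp n = Vp (n + 1) + Vp (n - 1) := by
  have h := Vp_add_two (n - 1)
  rw [show n - 1 + 2 = n + 1 by ring, show n - 1 + 1 = n by ring] at h
  linear_combination -h

lemma Tp_mul_Vp : ∀ (m : ℕ) (n : ℤ), Tp m * Vp n = Vp (n + m) + Vp (n - m) := by
  intro m
  induction m using Nat.strong_induction_on with
  | _ m ih =>
    match m with
    | 0 =>
      intro n
      simp only [Nat.cast_zero, add_zero, sub_zero]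
      rw [Tp_zero, show (C (2:ℝ)) = 2 from map_ofNat _ 2, two_mul]
    | 1 => intro n; simpa [Tp_one] using X_mul_Vp n
    | (j+2) =>
      intro n
      have h1 := ih (j+1) (by omega) n
      have h0 := ih j (by omega) n
      push_cast at h1 h0 ⊢
      have hT := Tp_add_two (j : ℤ)
      have e1 := X_mul_Vp (n + (j + 1))
      have e2 := X_mul_Vp (n - (j + 1))
      rw [show (n:ℤ) + (j+1) + 1 = n + (j+2) by ring, show (n:ℤ) + (j+1) - 1 = n + j by ring] at e1
      rw [show (n:ℤ) - (j+1) + 1 = n - j by ring, show (n:ℤ) - (j+1) - 1 = n - (j+2) by ring] at e2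
      rw [show ((j:ℤ)+2) = (j:ℤ) + 2 by ring]
      linear_combination Vp n * hT + X * h1 - h0 + e1 + e2

lemma monic_helper {q r : Polynomial ℝ} {d : ℕ} (hq : q.Monic) (hdq : q.natDegree = d + 1)
    (hr : r.natDegree ≤ d) : (X * q - r).Monic ∧ (X * q - r).natDegree = d + 2 := by
  have hXq : (X * q).Monic := monic_X.mul hq
  have hXqd : (X * q).natDegree = d + 2 := by
    rw [monic_X.natDegree_mul hq, natDegree_X, hdq]; omega
  have hlt : r.degree < (X * q).degree := by
    refine lt_of_le_of_lt (degree_le_natDegree) ?_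
    rw [degree_eq_natDegree hXq.ne_zero, hXqd]
    exact_mod_cast by omega
  constructor
  · have := hXq.add_of_left (q := -r) (by rwa [degree_neg])
    rwa [← sub_eq_add_neg] at this
  · have hd := degree_sub_eq_left_of_degree_lt hlt
    rw [← hXqd]; exact natDegree_eq_of_degree_eq hd

lemma Vp_monic : ∀ n : ℕ, (Vp n).Monic ∧ (Vp n).natDegree = n := by
  intro n
  induction n using Nat.strong_induction_on with
  | _ n ih =>
    match n with
    | 0 => simpa [Vp_zero] using monic_one
    | 1 => simpa [Vp_one] using monic_X
    | (j+2) =>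
      have h1 := ih (j+1) (by omega)
      have h0 := ih j (by omega)
      have he : Vp ((j+2 : ℕ) : ℤ) = X * Vp ((j+1 : ℕ) : ℤ) - Vp (j : ℕ) := by
        push_cast
        exact Vp_add_two (j : ℤ)
      rw [he]
      exact monic_helper h1.1 h1.2 (le_of_eq h0.2)

lemma Tp_monic : ∀ n : ℕ, (Tp (n+1 : ℕ)).Monic ∧ (Tp (n+1 : ℕ)).natDegree = n + 1 := by
  intro n
  induction n using Nat.strong_induction_on with
  | _ n ih =>
    match n with
    | 0 => simpa [Tp_one] using monic_X
    | 1 =>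
      have he : Tp ((2 : ℕ) : ℤ) = X * Tp ((1 : ℕ) : ℤ) - Tp 0 := by
        push_cast
        simpa using Tp_add_two 0
      rw [he]
      refine monic_helper (by simpa [Tp_one] using monic_X) (by simp [Tp_one]) ?_
      simp [Tp_zero]
    | (j+2) =>
      have h1 := ih (j+1) (by omega)
      have h0 := ih j (by omega)
      have he : Tp ((j+3 : ℕ) : ℤ) = X * Tp ((j+2 : ℕ) : ℤ) - Tp ((j+1 : ℕ) : ℤ) := by
        push_cast
        have := Tp_add_two ((j : ℤ) + 1)
        rw [show (j:ℤ) + 1 + 2 = j + 3 by ring, show (j:ℤ) + 1 + 1 = j + 2 by ring] at this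
        exact this
      rw [show ((j:ℕ)+2+1) = (j+3 : ℕ) by omega, he]
      exact monic_helper h1.1 h1.2 (le_of_eq h0.2)

noncomputable def cmpL : Polynomial ℝ →ₗ[ℝ] Polynomial ℝ where
  toFun q := q.comp (Tp 6)
  map_add' p q := add_comp
  map_smul' c p := by simp

noncomputable def L1 : Polynomial ℝ →ₗ[ℝ] Polynomial ℝ :=
  (LinearMap.mulLeft ℝ (Tp 1)).comp cmpL

noncomputable def L2 : Polynomial ℝ →ₗ[ℝ] Polynomial ℝ :=
  (LinearMap.mulLeft ℝ (Tp 1 * Tp 2)).comp cmpL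

lemma span1 : Submodule.span ℝ {p : Polynomial ℝ | ∃ q : Polynomial ℝ, p = Tp 1 * q.comp (Tp 6)}
    = LinearMap.range L1 := by
  have : {p : Polynomial ℝ | ∃ q : Polynomial ℝ, p = Tp 1 * q.comp (Tp 6)} = Set.range L1 := by
    ext p
    simp [L1, cmpL, eq_comm, LinearMap.mulLeft]
  rw [this, ← LinearMap.coe_range, Submodule.span_eq]

lemma span2 : Submodule.span ℝ {p : Polynomial ℝ | ∃ q : Polynomial ℝ, p = Tp 1 * Tp 2 * q.comp (Tp 6)}
    = LinearMap.range L2 := by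
  have : {p : Polynomial ℝ | ∃ q : Polynomial ℝ, p = Tp 1 * Tp 2 * q.comp (Tp 6)} = Set.range L2 := by
    ext p
    simp [L2, cmpL, eq_comm, LinearMap.mulLeft]
  rw [this, ← LinearMap.coe_range, Submodule.span_eq]

lemma mem_range_L1 (p : Polynomial ℝ) : p ∈ LinearMap.range L1 ↔ ∃ q : Polynomial ℝ, Tp 1 * q.comp (Tp 6) = p := by
  simp [L1, cmpL, LinearMap.mulLeft]

lemma mem_range_L2 (p : Polynomial ℝ) : p ∈ LinearMap.range L2 ↔ ∃ q : Polynomial ℝ, Tp 1 * Tp 2 * q.comp (Tp 6) = p := by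
  simp [L2, cmpL, LinearMap.mulLeft]

lemma Tp6_mul_Vp (n : ℤ) : Tp 6 * Vp n = Vp (n + 6) + Vp (n - 6) := by
  have := Tp_mul_Vp 6 n
  push_cast at this
  exact this

lemma Tp1_mul_Tp2 : Tp 1 * Tp 2 = Vp 3 := by
  have h := Tp_mul_Vp 2 1
  push_cast at h
  rw [Vp_neg_one, add_zero, Vp_one] at h
  rw [Tp_one]; linear_combination h

-- the sup submodule
noncomputable def M : Submodule ℝ (Polynomial ℝ) := LinearMap.range L1 ⊔ LinearMap.range L2

lemma mulTp6_mem_M {p : Polynomial ℝ} (hp : p ∈ M) : Tp 6 * p ∈ M := by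
  obtain ⟨a, ha, b, hb, rfl⟩ := Submodule.mem_sup.1 hp
  rw [mul_add]
  refine Submodule.add_mem _ (Submodule.mem_sup_left ?_) (Submodule.mem_sup_right ?_)
  · obtain ⟨q, rfl⟩ := (mem_range_L1 a).1 ha
    exact (mem_range_L1 _).2 ⟨X * q, by rw [mul_comp, X_comp]; ring⟩
  · obtain ⟨q, rfl⟩ := (mem_range_L2 b).1 hb
    exact (mem_range_L2 _).2 ⟨X * q, by rw [mul_comp, X_comp]; ring⟩

lemma Vp1_mem_M : Vp 1 ∈ M := by
  refine Submodule.mem_sup_left ((mem_range_L1 _).2 ⟨1, ?_⟩)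
  rw [one_comp, mul_one, Tp_one, Vp_one]

lemma Vp3_mem_M : Vp 3 ∈ M := by
  refine Submodule.mem_sup_right ((mem_range_L2 _).2 ⟨1, ?_⟩)
  rw [one_comp, mul_one, Tp1_mul_Tp2]

lemma Vp_mem_M : ∀ k : ℕ, Vp (6 * k + 1) ∈ M ∧ Vp (6 * k + 3) ∈ M := by
  intro k
  induction k using Nat.strong_induction_on with
  | _ k ih =>
    match k with
    | 0 => simpa using ⟨Vp1_mem_M, Vp3_mem_M⟩
    | 1 =>
      constructor
      · have h := Tp6_mul_Vp 1
        rw [show (1:ℤ) - 6 = -3 - 2 by ring, Vp_neg_sub_two] at h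
        rw [show (1:ℤ)+6 = 7 by ring] at h
        have : Vp (6 * ((1:ℕ):ℤ) + 1) = Tp 6 * Vp 1 + Vp 3 := by push_cast; linear_combination -h
        rw [this]
        exact Submodule.add_mem _ (mulTp6_mem_M Vp1_mem_M) Vp3_mem_M
      · have h := Tp6_mul_Vp 3
        rw [show (3:ℤ) - 6 = -1 - 2 by ring, Vp_neg_sub_two] at h
        rw [show (3:ℤ)+6 = 9 by ring] at h
        have : Vp (6 * ((1:ℕ):ℤ) + 3) = Tp 6 * Vp 3 + Vp 1 := by push_cast; linear_combination -h
        rw [this]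
        exact Submodule.add_mem _ (mulTp6_mem_M Vp3_mem_M) Vp1_mem_M
    | (j+2) =>
      have h1 := ih (j+1) (by omega)
      have h0 := ih j (by omega)
      constructor
      · have h := Tp6_mul_Vp (6 * (j:ℤ) + 7)
        have : Vp (6 * ((j:ℕ)+2 : ℕ) + 1) = Tp 6 * Vp (6 * ((j+1:ℕ):ℤ) + 1) - Vp (6 * ((j:ℕ):ℤ) + 1) := by
          push_cast
          rw [show 6*(j:ℤ)+7+6 = 6*((j:ℤ)+2)+1 by ring] at h
          rw [show 6*(j:ℤ)+7-6 = 6*(j:ℤ)+1 by ring] at h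
          rw [show 6*((j:ℤ)+1)+1 = 6*(j:ℤ)+7 by ring]
          linear_combination -h
        rw [this]
        exact Submodule.sub_mem _ (mulTp6_mem_M h1.1) h0.1
      · have h := Tp6_mul_Vp (6 * (j:ℤ) + 9)
        have : Vp (6 * ((j:ℕ)+2 : ℕ) + 3) = Tp 6 * Vp (6 * ((j+1:ℕ):ℤ) + 3) - Vp (6 * ((j:ℕ):ℤ) + 3) := by
          push_cast
          rw [show 6*(j:ℤ)+9+6 = 6*((j:ℤ)+2)+3 by ring] at h
          rw [show 6*(j:ℤ)+9-6 = 6*(j:ℤ)+3 by ring] at h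
          rw [show 6*((j:ℤ)+1)+3 = 6*(j:ℤ)+9 by ring]
          linear_combination -h
        rw [this]
        exact Submodule.sub_mem _ (mulTp6_mem_M h1.2) h0.2

noncomputable def N : Submodule ℝ (Polynomial ℝ) := Submodule.span ℝ (Set.range W)

lemma W_even (k : ℕ) : W (2 * k) = Vp (6 * k + 1) := by
  unfold W
  rw [if_pos (by omega)]
  congr 1
  omega

lemma W_odd (k : ℕ) : W (2 * k + 1) = Vp (6 * k + 3) := by
  unfold W
  rw [if_neg (by omega)]
  congr 1
  omega

lemma Vp_mem_N (k : ℕ) : Vp (6 * k + 1) ∈ N ∧ Vp (6 * k + 3) ∈ N :=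
  ⟨Submodule.subset_span ⟨2 * k, W_even k⟩, Submodule.subset_span ⟨2 * k + 1, W_odd k⟩⟩

lemma Tp6_mul_Vp_mem_N (k : ℕ) : Tp 6 * Vp (6 * k + 1) ∈ N ∧ Tp 6 * Vp (6 * k + 3) ∈ N := by
  match k with
  | 0 =>
    constructor
    · have h := Tp6_mul_Vp 1
      rw [show (1:ℤ) - 6 = -3 - 2 by ring, Vp_neg_sub_two, show (1:ℤ)+6 = 7 by ring] at h
      have e : Tp 6 * Vp (6 * ((0:ℕ):ℤ) + 1) = Vp (6 * (1:ℕ) + 1) - Vp (6 * (0:ℕ) + 3) := by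
        push_cast; linear_combination h
      rw [e]
      exact Submodule.sub_mem _ (Vp_mem_N 1).1 (Vp_mem_N 0).2
    · have h := Tp6_mul_Vp 3
      rw [show (3:ℤ) - 6 = -1 - 2 by ring, Vp_neg_sub_two, show (3:ℤ)+6 = 9 by ring] at h
      have e : Tp 6 * Vp (6 * ((0:ℕ):ℤ) + 3) = Vp (6 * (1:ℕ) + 3) - Vp (6 * (0:ℕ) + 1) := by
        push_cast; linear_combination h
      rw [e]
      exact Submodule.sub_mem _ (Vp_mem_N 1).2 (Vp_mem_N 0).1
  | (j+1) =>
    constructor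
    · have h := Tp6_mul_Vp (6 * (j:ℤ) + 7)
      have e : Tp 6 * Vp (6 * ((j+1:ℕ):ℤ) + 1) = Vp (6 * (j+2:ℕ) + 1) + Vp (6 * (j:ℕ) + 1) := by
        push_cast
        rw [show 6*(j:ℤ)+7+6 = 6*((j:ℤ)+2)+1 by ring, show 6*(j:ℤ)+7-6 = 6*(j:ℤ)+1 by ring] at h
        rw [show 6*((j:ℤ)+1)+1 = 6*(j:ℤ)+7 by ring]
        linear_combination h
      rw [e]
      exact Submodule.add_mem _ (Vp_mem_N (j+2)).1 (Vp_mem_N j).1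
    · have h := Tp6_mul_Vp (6 * (j:ℤ) + 9)
      have e : Tp 6 * Vp (6 * ((j+1:ℕ):ℤ) + 3) = Vp (6 * (j+2:ℕ) + 3) + Vp (6 * (j:ℕ) + 3) := by
        push_cast
        rw [show 6*(j:ℤ)+9+6 = 6*((j:ℤ)+2)+3 by ring, show 6*(j:ℤ)+9-6 = 6*(j:ℤ)+3 by ring] at h
        rw [show 6*((j:ℤ)+1)+3 = 6*(j:ℤ)+9 by ring]
        linear_combination h
      rw [e]
      exact Submodule.add_mem _ (Vp_mem_N (j+2)).2 (Vp_mem_N j).2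

lemma mulTp6_mem_N {p : Polynomial ℝ} (hp : p ∈ N) : Tp 6 * p ∈ N := by
  induction hp using Submodule.span_induction with
  | mem x hx =>
    obtain ⟨n, rfl⟩ := hx
    rcases Nat.even_or_odd n with ⟨k, hk⟩ | ⟨k, hk⟩
    · rw [show n = 2 * k by omega, W_even]
      exact (Tp6_mul_Vp_mem_N k).1
    · rw [show n = 2 * k + 1 by omega, W_odd]
      exact (Tp6_mul_Vp_mem_N k).2
  | zero => rw [mul_zero]; exact Submodule.zero_mem _
  | add x y _ _ hx hy => rw [mul_add]; exact Submodule.add_mem _ hx hy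
  | smul c x _ hx => rw [mul_smul_comm]; exact Submodule.smul_mem _ _ hx

lemma pow_mul_mem_N (v : Polynomial ℝ) (hv : v ∈ N) : ∀ n : ℕ, Tp 6 ^ n * v ∈ N := by
  intro n
  induction n with
  | zero => simpa using hv
  | succ m ih =>
    rw [pow_succ, show Tp 6 ^ m * Tp 6 * v = Tp 6 * (Tp 6 ^ m * v) by ring]
    exact mulTp6_mem_N ih

lemma Tp1_comp_mem_N (q : Polynomial ℝ) : Tp 1 * q.comp (Tp 6) ∈ N := by
  induction q using Polynomial.induction_on' with
  | add p q hp hq => rw [add_comp, mul_add]; exact Submodule.add_mem _ hp hq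
  | monomial n a =>
    rw [monomial_comp, show Tp 1 * (C a * Tp 6 ^ n) = a • (Tp 6 ^ n * Tp 1) by
      rw [smul_eq_C_mul]; ring]
    refine Submodule.smul_mem _ _ (pow_mul_mem_N _ ?_ n)
    rw [Tp_one, ← Vp_one]
    exact (Vp_mem_N 0).1

lemma Tp1_Tp2_comp_mem_N (q : Polynomial ℝ) : Tp 1 * Tp 2 * q.comp (Tp 6) ∈ N := by
  induction q using Polynomial.induction_on' with
  | add p q hp hq => rw [add_comp, mul_add]; exact Submodule.add_mem _ hp hq
  | monomial n a =>
    rw [monomial_comp, show Tp 1 * Tp 2 * (C a * Tp 6 ^ n) = a • (Tp 6 ^ n * (Tp 1 * Tp 2)) by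
      rw [smul_eq_C_mul]; ring]
    refine Submodule.smul_mem _ _ (pow_mul_mem_N _ ?_ n)
    rw [Tp1_mul_Tp2, show (3:ℤ) = 6 * ((0:ℕ):ℤ) + 3 by norm_num]
    exact (Vp_mem_N 0).2

lemma L1_le_N : LinearMap.range L1 ≤ N := by
  rintro p hp
  obtain ⟨q, rfl⟩ := (mem_range_L1 p).1 hp
  exact Tp1_comp_mem_N q

lemma L2_le_N : LinearMap.range L2 ≤ N := by
  rintro p hp
  obtain ⟨q, rfl⟩ := (mem_range_L2 p).1 hp
  exact Tp1_Tp2_comp_mem_N q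

lemma Tp6_monic : (Tp 6).Monic ∧ (Tp 6).natDegree = 6 := by
  have h := Tp_monic 5
  norm_num at h
  exact h

lemma Vp3_facts : (Vp 3).Monic ∧ (Vp 3).natDegree = 3 := by
  have h := Vp_monic 3
  norm_num at h
  exact h

lemma comp_Tp6_ne_zero {q : Polynomial ℝ} (hq : q ≠ 0) : q.comp (Tp 6) ≠ 0 := by
  have h6 : (Tp 6).natDegree ≠ 0 := by rw [Tp6_monic.2]; norm_num
  have hl : (q.comp (Tp 6)).leadingCoeff = q.leadingCoeff * (Tp 6).leadingCoeff ^ q.natDegree :=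
    leadingCoeff_comp h6
  rw [Tp6_monic.1.leadingCoeff, one_pow, mul_one] at hl
  intro h0
  apply hq
  rw [← leadingCoeff_eq_zero, ← hl, h0, leadingCoeff_zero]

lemma natDegree_comp_Tp6 (q : Polynomial ℝ) : (q.comp (Tp 6)).natDegree = 6 * q.natDegree := by
  rw [natDegree_comp, Tp6_monic.2, mul_comm]

lemma disjointness :
    Submodule.span ℝ {p : Polynomial ℝ | ∃ q : Polynomial ℝ, p = Tp 1 * q.comp (Tp 6)} ⊓
      Submodule.span ℝ
        {p : Polynomial ℝ | ∃ q : Polynomial ℝ, p = Tp 1 * Tp 2 * q.comp (Tp 6)} = ⊥ := by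
  rw [span1, span2, eq_bot_iff]
  rintro p hp
  obtain ⟨hp1, hp2⟩ := Submodule.mem_inf.1 hp
  obtain ⟨q, hq⟩ := (mem_range_L1 p).1 hp1
  obtain ⟨r, hr⟩ := (mem_range_L2 p).1 hp2
  rw [Submodule.mem_bot]
  by_contra hp0
  have hq0 : q ≠ 0 := by rintro rfl; simp at hq; exact hp0 hq.symm
  have hr0 : r ≠ 0 := by rintro rfl; simp at hr; exact hp0 hr.symm
  have hqc := comp_Tp6_ne_zero hq0
  have hrc := comp_Tp6_ne_zero hr0
  have d1 : p.natDegree = 1 + 6 * q.natDegree := by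
    rw [← hq, Tp_one, natDegree_mul X_ne_zero hqc, natDegree_X, natDegree_comp_Tp6]
  have d2 : p.natDegree = 3 + 6 * r.natDegree := by
    rw [← hr, Tp1_mul_Tp2, natDegree_mul Vp3_facts.1.ne_zero hrc, Vp3_facts.2,
      natDegree_comp_Tp6]
  omega

lemma W_natDegree (n : ℕ) : (W n).natDegree = 2 * n + 2 * (n / 2) + 1 := by
  rcases Nat.even_or_odd n with ⟨k, hk⟩ | ⟨k, hk⟩
  · rw [show n = 2 * k by omega, W_even]
    have h := (Vp_monic (6 * k + 1)).2
    rw [show ((6 * k + 1 : ℕ) : ℤ) = 6 * (k : ℤ) + 1 by push_cast; ring] at h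
    rw [h]
    omega
  · rw [show n = 2 * k + 1 by omega, W_odd]
    have h := (Vp_monic (6 * k + 3)).2
    rw [show ((6 * k + 3 : ℕ) : ℤ) = 6 * (k : ℤ) + 3 by push_cast; ring] at h
    rw [h]
    omega

theorem stmt_18 :
    (∀ n : ℕ, (W n).natDegree = 2 * n + 2 * (n / 2) + 1) ∧
      Submodule.span ℝ (Set.range W) =
        Submodule.span ℝ {p : Polynomial ℝ | ∃ q : Polynomial ℝ, p = Tp 1 * q.comp (Tp 6)} ⊔
          Submodule.span ℝ
            {p : Polynomial ℝ | ∃ q : Polynomial ℝ, p = Tp 1 * Tp 2 * q.comp (Tp 6)} ∧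
      Submodule.span ℝ {p : Polynomial ℝ | ∃ q : Polynomial ℝ, p = Tp 1 * q.comp (Tp 6)} ⊓
          Submodule.span ℝ
            {p : Polynomial ℝ | ∃ q : Polynomial ℝ, p = Tp 1 * Tp 2 * q.comp (Tp 6)} = ⊥ := by
  refine ⟨W_natDegree, ?_, disjointness⟩
  rw [span1, span2]
  apply le_antisymm
  · rw [Submodule.span_le]
    rintro p ⟨n, rfl⟩
    rcases Nat.even_or_odd n with ⟨k, hk⟩ | ⟨k, hk⟩
    · rw [show n = 2 * k by omega, W_even]
      exact (Vp_mem_M k).1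
    · rw [show n = 2 * k + 1 by omega, W_odd]
      exact (Vp_mem_M k).2
  · exact sup_le L1_le_N L2_le_N
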